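/- arXiv:2007.13050 — 2 statements merged into one kernel-verified Lean document; each statement's English description precedes it below -/
import Mathlib

section
/- Let P be an N×N column-stochastic matrix, x : Fin N → ℝ^d, and y : Fin N → ℝ with y(i) > 0 for all i. Define x'(j) = Σ_i p_{ji} x(i), y'(j) = Σ_i p_{ji} y(i), and ratio states r(i) = x(i)/y(i), r'(i) = x'(i)/y'(i). Then the convex hull of {r'(i)} is contained in the convex hull of {r(i)}. -/
theorem stmt_10 {N d : ℕ} (P : Matrix (Fin N) (Fin N) ℝ)
    (hnonneg : ∀ j i, 0 ≤ P j i) (hcol : ∀ i, ∑ j, P j i = 1)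
    (hrowpos : ∀ j, ∃ i, 0 < P j i)
    (x : Fin N → EuclideanSpace ℝ (Fin d)) (y : Fin N → ℝ)
    (hy : ∀ i, 0 < y i) :
    convexHull ℝ
        (Set.range fun j => (∑ i, P j i * y i)⁻¹ • ∑ i, P j i • x i) ⊆
      convexHull ℝ (Set.range fun i => (y i)⁻¹ • x i) := by
  apply convexHull_min _ (convex_convexHull ℝ _)
  rintro _ ⟨j, rfl⟩
  dsimp only
  set S := ∑ i, P j i * y i with hS
  have hSpos : 0 < S := by
    obtain ⟨i, hi⟩ := hrowpos j
    exact Finset.sum_pos' (fun k _ => mul_nonneg (hnonneg j k) (hy k).le)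
      ⟨i, Finset.mem_univ i, mul_pos hi (hy i)⟩
  have key : (S⁻¹ • ∑ i, P j i • x i)
      = ∑ i, (P j i * y i / S) • ((y i)⁻¹ • x i) := by
    rw [Finset.smul_sum]
    refine Finset.sum_congr rfl fun i _ => ?_
    rw [smul_smul, smul_smul]
    congr 1
    field_simp [hSpos.ne', (hy i).ne']
  rw [key]
  refine Convex.sum_mem (convex_convexHull ℝ _) (fun i _ => ?_) ?_ (fun i _ => ?_)
  · exact div_nonneg (mul_nonneg (hnonneg j i) (hy i).le) hSpos.le
  · rw [← Finset.sum_div, ← hS, div_self hSpos.ne']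
  · exact subset_convexHull ℝ _ ⟨i, rfl⟩
end

section
/- Let G be a strongly connected directed graph with vertex set V and diameter at most D, where each node i holds a finite set S_i ⊆ ℝ^d. Define x_i(0) = 𝓔(S_i) and x_i(t) = 𝓔(⋃_{j ∈ N⁻_i(1)} x_j(t−1)), where 𝓔(U) denotes the set of extreme points of co(U). Then for all t ≥ 0, x_i(t) = 𝓔(⋃_{j ∈ N⁻_i(t)} S_j), and in particular x_i(t) = 𝓔(⋃_{j ∈ V} S_j) for all t ≥ D and all i. -/
/-- One-step in-neighborhood of `i` (including `i` itself). -/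
def inNbhd {V : Type*} (adj : V → V → Prop) (i : V) : Set V :=
  {j | adj i j} ∪ {i}

/-- `m`-step in-neighborhood: nodes from which `i` can be reached in at most `m` steps. -/
def inNbhdIter {V : Type*} (adj : V → V → Prop) (i : V) : ℕ → Set V
  | 0 => {i}
  | m + 1 => ⋃ j ∈ inNbhdIter adj i m, inNbhd adj j

/-- The extreme points of the convex hull of a set. -/
def extPts {d : ℕ} (U : Set (EuclideanSpace ℝ (Fin d))) : Set (EuclideanSpace ℝ (Fin d)) :=
  Set.extremePoints ℝ (convexHull ℝ U)

lemma extPts_subset {d : ℕ} {U : Set (EuclideanSpace ℝ (Fin d))} : extPts U ⊆ U :=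
  extremePoints_convexHull_subset

lemma hull_extPts {d : ℕ} {U : Set (EuclideanSpace ℝ (Fin d))} (hU : U.Finite) :
    convexHull ℝ (extPts U) = convexHull ℝ U := by
  have h3 : IsClosed (convexHull ℝ (extPts U)) :=
    ((hU.subset extPts_subset).isCompact_convexHull (𝕜 := ℝ)).isClosed
  unfold extPts at h3 ⊢
  have h2 := closure_convexHull_extremePoints (hU.isCompact_convexHull (𝕜 := ℝ)) (convex_convexHull ℝ U)
  conv_rhs => rw [← h2]
  exact (h3.closure_eq).symm

lemma hull_biUnion_extPts {V : Type*} {d : ℕ} (I : Set V)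
    (A : V → Set (EuclideanSpace ℝ (Fin d))) (hA : ∀ j, (A j).Finite) :
    convexHull ℝ (⋃ j ∈ I, Set.extremePoints ℝ (convexHull ℝ (A j)))
      = convexHull ℝ (⋃ j ∈ I, A j) := by
  apply le_antisymm
  · exact convexHull_mono (Set.iUnion₂_mono fun j _ =>
      (extremePoints_convexHull_subset : Set.extremePoints ℝ (convexHull ℝ (A j)) ⊆ A j))
  · apply convexHull_min _ (convex_convexHull ℝ _)
    intro a ha
    obtain ⟨j, hj, haj⟩ := Set.mem_iUnion₂.1 ha
    have : a ∈ convexHull ℝ (extPts (A j)) := by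
      rw [hull_extPts (hA j)]; exact subset_convexHull ℝ _ haj
    exact convexHull_mono (Set.subset_iUnion₂ j hj) this

lemma inNbhdIter_succ' {V : Type*} (adj : V → V → Prop) (i : V) (t : ℕ) :
    inNbhdIter adj i (t + 1) = ⋃ j ∈ inNbhd adj i, inNbhdIter adj j t := by
  induction t generalizing i with
  | zero =>
    ext k
    simp [inNbhdIter]
  | succ t ih =>
    show (⋃ j ∈ inNbhdIter adj i (t + 1), inNbhd adj j) = _
    rw [ih i]
    have : ∀ j : V, inNbhdIter adj j (t + 1) = ⋃ k ∈ inNbhdIter adj j t, inNbhd adj k :=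
      fun j => rfl
    ext k
    simp only [this, Set.mem_iUnion]
    tauto

lemma self_mem_inNbhd {V : Type*} (adj : V → V → Prop) (j : V) : j ∈ inNbhd adj j :=
  Or.inr rfl

lemma inNbhdIter_mono {V : Type*} (adj : V → V → Prop) (i : V) {s t : ℕ} (h : s ≤ t) :
    inNbhdIter adj i s ⊆ inNbhdIter adj i t := by
  induction h with
  | refl => exact subset_rfl
  | step h ih =>
    refine ih.trans ?_
    intro k hk
    exact Set.mem_biUnion hk (self_mem_inNbhd adj k)

theorem stmt_15 {V : Type*} [Fintype V] {d : ℕ} (adj : V → V → Prop)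
    (S : V → Set (EuclideanSpace ℝ (Fin d))) (hS : ∀ i, (S i).Finite)
    (D : ℕ) (hD : ∀ i j, j ∈ inNbhdIter adj i D)
    (x : V → ℕ → Set (EuclideanSpace ℝ (Fin d)))
    (hx0 : ∀ i, x i 0 = extPts (S i))
    (hxs : ∀ i t, x i (t + 1) = extPts (⋃ j ∈ inNbhd adj i, x j t)) :
    (∀ i t, x i t = extPts (⋃ j ∈ inNbhdIter adj i t, S j)) ∧
      ∀ i t, D ≤ t → x i t = extPts (⋃ j, S j) := by
  have main : ∀ t i, x i t = extPts (⋃ j ∈ inNbhdIter adj i t, S j) := by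
    intro t
    induction t with
    | zero =>
      intro i
      have h0 : (⋃ j ∈ inNbhdIter adj i 0, S j) = S i := by simp [inNbhdIter]
      rw [hx0 i, h0]
    | succ t ih =>
      intro i
      rw [hxs i t]
      have hA : ∀ j, (⋃ k ∈ inNbhdIter adj j t, S k).Finite :=
        fun j => Set.Finite.biUnion (Set.toFinite _) (fun k _ => hS k)
      have hsets : (⋃ j ∈ inNbhd adj i, ⋃ k ∈ inNbhdIter adj j t, S k)
          = ⋃ j ∈ inNbhdIter adj i (t + 1), S j := by
        rw [inNbhdIter_succ']
        ext a
        simp only [Set.mem_iUnion]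
        tauto
      calc extPts (⋃ j ∈ inNbhd adj i, x j t)
          = extPts (⋃ j ∈ inNbhd adj i, extPts (⋃ k ∈ inNbhdIter adj j t, S k)) := by
            simp only [ih]
        _ = extPts (⋃ j ∈ inNbhd adj i, ⋃ k ∈ inNbhdIter adj j t, S k) := by
            unfold extPts
            rw [hull_biUnion_extPts _ _ hA]
        _ = extPts (⋃ j ∈ inNbhdIter adj i (t + 1), S j) := by rw [hsets]
  refine ⟨fun i t => main t i, fun i t ht => ?_⟩
  rw [main t i]
  have huniv : inNbhdIter adj i t = Set.univ :=
    Set.eq_univ_of_univ_subset fun j _ => inNbhdIter_mono adj i ht (hD i j)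
  rw [huniv]
  simp
end
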